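/- arXiv:2002.02118 — 3 statements merged into one kernel-verified Lean document; each statement's English description precedes it below -/
import Mathlib

section
/- Let k be a field and let X' be a variable in the polynomial ring k[X₁, X₂, …, Xₙ], meaning there exist Y₂, …, Yₙ ∈ k[X₁, …, Xₙ] with k[X', Y₂, …, Yₙ] = k[X₁, …, Xₙ]. If X' and X₁ are comaximal, i.e., the ideal generated by X' and X₁ in k[X₁, …, Xₙ] is the unit ideal, then X' = α·X₁ + β for some α, β ∈ k with α ≠ 0. -/
open MvPolynomial

private lemma mv_isUnit_eq_C {k : Type*} [Field k] :
    ∀ (m : ℕ) (p : MvPolynomial (Fin m) k), IsUnit p → ∃ c : k, c ≠ 0 ∧ p = C c := by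
  intro m
  induction m with
  | zero =>
    intro p hp
    refine ⟨constantCoeff p, ?_, ?_⟩
    · exact (hp.map constantCoeff).ne_zero
    · exact (eq_C_of_isEmpty p)
  | succ m ih =>
    intro p hp
    set e := finSuccEquiv k m
    have hep : IsUnit (e p) := hp.map e
    obtain ⟨r, hr, hre⟩ := Polynomial.isUnit_iff.mp hep
    obtain ⟨c, hc, rfl⟩ := ih r hr
    refine ⟨c, hc, ?_⟩
    have := RingHom.congr_fun (finSuccEquiv_comp_C_eq_C (R := k) m) c
    simp only [RingHom.comp_apply, RingHom.coe_coe] at this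
    calc p = e.symm (e p) := (e.symm_apply_apply p).symm
    _ = e.symm (Polynomial.C (C c)) := by rw [← hre]
    _ = C c := this

/-- Let `k` be a field and `X'` a variable of `k[X₁, …, Xₙ]` (part of a coordinate system).
If the ideal generated by `X'` and `X₁` is the unit ideal, then `X' = α·X₁ + β` with
`α, β ∈ k`, `α ≠ 0`. -/
theorem variable_comaximal_with_coordinate
    {k : Type*} [Field k] (n : ℕ) (X' : MvPolynomial (Fin (n + 1)) k)
    (hvar : ∃ v : Fin (n + 1) → MvPolynomial (Fin (n + 1)) k, v 0 = X' ∧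
      Function.Bijective
        (aeval v : MvPolynomial (Fin (n + 1)) k →ₐ[k] MvPolynomial (Fin (n + 1)) k))
    (hcomax : Ideal.span {X', X 0} = (⊤ : Ideal (MvPolynomial (Fin (n + 1)) k))) :
    ∃ α β : k, α ≠ 0 ∧ X' = C α * X 0 + C β := by
  obtain ⟨v, hv0, hbij⟩ := hvar
  set φ : MvPolynomial (Fin (n + 1)) k ≃ₐ[k] MvPolynomial (Fin (n + 1)) k :=
    AlgEquiv.ofBijective (aeval v) hbij with hφ
  have hφX0 : φ (X 0) = X' := by
    simp [hφ, AlgEquiv.ofBijective, hv0]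
  set ψ := φ.symm with hψ
  set Q := ψ (X 0) with hQ
  have hψX' : ψ X' = X 0 := by rw [← hφX0]; exact φ.symm_apply_apply _
  -- transfer comaximality through ψ
  have hspan2 : Ideal.span {(X 0 : MvPolynomial (Fin (n + 1)) k), Q} = ⊤ := by
    have hmap := Ideal.map_span (ψ.toAlgHom.toRingHom)
      ({X', X 0} : Set (MvPolynomial (Fin (n + 1)) k))
    rw [hcomax, Ideal.map_top] at hmap
    rw [Set.image_pair] at hmap
    simpa [hψX'] using hmap.symm
  have h1 : (1 : MvPolynomial (Fin (n + 1)) k) ∈ Ideal.span {(X 0 : MvPolynomial (Fin (n + 1)) k), Q} := by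
    rw [hspan2]; trivial
  obtain ⟨a, b, hab⟩ := Ideal.mem_span_pair.mp h1
  set e := finSuccEquiv k n with he
  -- constant coefficient of e Q is a unit
  have habe := congrArg (fun p => Polynomial.coeff (e p) 0) hab
  simp only [he, map_add, map_mul, map_one, finSuccEquiv_X_zero, Polynomial.coeff_add,
    Polynomial.mul_coeff_zero, Polynomial.coeff_X_zero, mul_zero, zero_add,
    Polynomial.coeff_one_zero] at habe
  have hu : IsUnit ((e Q).coeff 0) := by
    refine IsUnit.of_mul_eq_one ((e b).coeff 0) ?_
    rw [mul_comm, he]; exact habe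
  obtain ⟨c, hc, hcC⟩ := mv_isUnit_eq_C n _ hu
  -- decompose Q = X 0 * h + C c
  have hdecomp : Q = X 0 * e.symm ((e Q).divX) + C c := by
    have h1 : Polynomial.X * (e Q).divX + Polynomial.C ((e Q).coeff 0) = e Q :=
      Polynomial.X_mul_divX_add _
    have h2 := congrArg e.symm h1
    have hCc : e.symm (Polynomial.C (C c)) = C c := by
      have := RingHom.congr_fun (finSuccEquiv_comp_C_eq_C (R := k) n) c
      simpa using this
    have hX : e.symm Polynomial.X = X 0 := by
      rw [← finSuccEquiv_X_zero (R := k) (n := n)]; exact e.symm_apply_apply _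
    rw [map_add, map_mul, hcC, hCc, hX, e.symm_apply_apply] at h2
    exact h2.symm
  -- apply φ
  have hkey : (X 0 : MvPolynomial (Fin (n + 1)) k) - C c = X' * φ (e.symm ((e Q).divX)) := by
    have := congrArg φ hdecomp
    rw [hQ, φ.apply_symm_apply, map_add, map_mul, hφX0] at this
    have hφC : φ (C c) = C c := by
      simpa using φ.commutes c
    rw [hφC] at this
    rw [this]; ring
  -- X 0 - C c is prime
  have hprime : Prime ((X 0 : MvPolynomial (Fin (n + 1)) k) - C c) := by
    have heC : e (C c) = Polynomial.C (C c) := by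
      have := RingHom.congr_fun (finSuccEquiv_comp_C_eq_C (R := k) n) c
      simp only [RingHom.comp_apply, RingHom.coe_coe] at this
      rw [← this, e.apply_symm_apply]
    refine (MulEquiv.prime_iff e.toRingEquiv.toMulEquiv).mp ?_
    show Prime (e ((X 0 : MvPolynomial (Fin (n + 1)) k) - C c))
    rw [map_sub, finSuccEquiv_X_zero, heC]
    exact Polynomial.prime_X_sub_C _
  -- X' is not a unit
  have hX'notunit : ¬ IsUnit X' := by
    intro h
    obtain ⟨d, _, hd⟩ := mv_isUnit_eq_C (n + 1) X' h
    have : (X 0 : MvPolynomial (Fin (n + 1)) k) = C d := by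
      rw [← hψX', hd]
      simpa using ψ.commutes d
    have h1 : (X 0 : MvPolynomial (Fin (n + 1)) k).totalDegree = 1 := totalDegree_X 0
    rw [this, totalDegree_C] at h1
    exact zero_ne_one h1
  -- conclude
  rcases hprime.irreducible.isUnit_or_isUnit hkey with h | h
  · exact absurd h hX'notunit
  obtain ⟨α', hα', hαC⟩ := mv_isUnit_eq_C (n + 1) _ h
  rw [hαC] at hkey
  refine ⟨α'⁻¹, -(α'⁻¹ * c), inv_ne_zero hα', ?_⟩
  have h2 : X' * (C α' * C α'⁻¹) = C α'⁻¹ * ((X 0 : MvPolynomial (Fin (n + 1)) k) - C c) := by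
    rw [hkey]; ring
  rw [← C_mul, mul_inv_cancel₀ hα', C_1, mul_one] at h2
  rw [h2, map_neg, C_mul]
  ring
end

section
/- Let R be a unique factorization domain with field of fractions K, and let U ∈ R[X, Y] be such that K[X, Y] is a polynomial ring in one variable over K[U] (equivalently, K[X, Y] = K[U, V'] for some V', i.e., U is a variable of K[X, Y]). Then D := K[U] ∩ R[X, Y] is an inert (factorially closed) subring of R[X, Y], and D = R[W] for some W ∈ R[X, Y] with K[W] = K[U]; in particular, D is a polynomial ring in one variable over R. -/
open MvPolynomial

lemma aux_map_polyaeval {R S : Type*} [CommSemiring R] [CommSemiring S] {σ : Type*}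
    (f : R →+* S) (W : MvPolynomial σ R) (G : Polynomial R) :
    MvPolynomial.map f (Polynomial.aeval W G) =
      Polynomial.aeval (MvPolynomial.map f W) (G.map f) := by
  rw [Polynomial.aeval_def, Polynomial.aeval_def, Polynomial.eval₂_map,
    Polynomial.hom_eval₂]
  congr 1
  ext a
  simp

lemma aux_transcendental_of_nonconstant :
    ∀ (n : ℕ) {A : Type*} [CommRing A] [IsDomain A] (f : MvPolynomial (Fin n) A),
      f ∉ Set.range (MvPolynomial.C : A → MvPolynomial (Fin n) A) → Transcendental A f := by
  intro n
  induction n with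
  | zero =>
    intro A _ _ f hf
    obtain ⟨a, ha⟩ := C_surjective (Fin 0) f
    exact absurd ⟨a, ha⟩ hf
  | succ n ih =>
    intro A _ _ f hf
    set e := finSuccEquiv A n with he
    have hne : f ≠ 0 := fun h => hf ⟨0, by simp [h]⟩
    have transfer : Transcendental A (e f) → Transcendental A f := by
      intro h halg
      exact h (halg.algHom e.toAlgHom)
    apply transfer
    by_cases hdeg : (e f).natDegree = 0
    · obtain ⟨q, hq⟩ := Polynomial.natDegree_eq_zero.mp hdeg
      have hqC : q ∉ Set.range (MvPolynomial.C : A → MvPolynomial (Fin n) A) := by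
        rintro ⟨a, rfl⟩
        apply hf
        refine ⟨a, e.injective ?_⟩
        rw [← hq]
        have : (MvPolynomial.C a : MvPolynomial (Fin (n+1)) A) = algebraMap A _ a := rfl
        rw [this, AlgEquiv.commutes]
        rfl
      have hq' := ih q hqC
      rw [← hq]
      have : (Polynomial.C q : Polynomial (MvPolynomial (Fin n) A)) =
          algebraMap (MvPolynomial (Fin n) A) _ q := rfl
      rw [this]
      exact (transcendental_algebraMap_iff
        (by rw [Polynomial.algebraMap_eq]; exact Polynomial.C_injective)).mpr hq'
    · have hne' : e f ≠ 0 := fun h => hne (by simpa using e.injective (by simp [h]))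
      have : Transcendental (MvPolynomial (Fin n) A) (e f) :=
        Polynomial.transcendental _ hdeg
          (mem_nonZeroDivisors_of_ne_zero (Polynomial.leadingCoeff_ne_zero.mpr hne'))
      exact Transcendental.restrictScalars (R := A) (S := MvPolynomial (Fin n) A)
        (by rw [MvPolynomial.algebraMap_eq]; exact MvPolynomial.C_injective _ _) this

lemma aux_dvd_of_aeval_eq {R : Type*} [CommRing R] [IsDomain R] [UniqueFactorizationMonoid R]
    (W : MvPolynomial (Fin 2) R)
    (hWc : W ∉ Set.range (MvPolynomial.C : R → MvPolynomial (Fin 2) R))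
    (hW : ∀ p : R, Prime p → ∀ c : R, ¬ (MvPolynomial.C p ∣ W - MvPolynomial.C c))
    (d : R) :
    ∀ (G : Polynomial R) (z : MvPolynomial (Fin 2) R),
      Polynomial.aeval W G = MvPolynomial.C d * z → Polynomial.C d ∣ G := by
  have htr : Transcendental R W := aux_transcendental_of_nonconstant 2 W hWc
  induction d using UniqueFactorizationMonoid.induction_on_prime with
  | h₁ =>
    intro G z hGz
    have : G = 0 := (transcendental_iff.mp htr) G (by simpa using hGz)
    simp [this]
  | h₂ u hu =>
    intro G z hGz
    exact (hu.map (Polynomial.C : R →+* Polynomial R)).dvd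
  | h₃ a p ha hp ih =>
    intro G z hGz
    have hprime : Ideal.IsPrime (Ideal.span {p} : Ideal R) :=
      (Ideal.span_singleton_prime hp.ne_zero).mpr hp
    set q : R →+* R ⧸ Ideal.span {p} := Ideal.Quotient.mk _ with hqdef
    have hq0 : q p = 0 := by
      rw [hqdef, Ideal.Quotient.eq_zero_iff_mem]
      exact Ideal.mem_span_singleton_self p
    have hmap : Polynomial.aeval (MvPolynomial.map q W) (G.map q) = 0 := by
      rw [← aux_map_polyaeval, hGz]
      rw [map_mul, MvPolynomial.map_C, map_mul, hq0]
      simp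
    have hWq : (MvPolynomial.map q W) ∉
        Set.range (MvPolynomial.C : _ → MvPolynomial (Fin 2) (R ⧸ Ideal.span {p})) := by
      rintro ⟨s, hs⟩
      obtain ⟨c, rfl⟩ := Ideal.Quotient.mk_surjective s
      apply hW p hp c
      rw [MvPolynomial.C_dvd_iff_dvd_coeff]
      intro m
      have h0 : MvPolynomial.map q (W - MvPolynomial.C c) = 0 := by
        rw [map_sub, ← hs, MvPolynomial.map_C]
        simp [hqdef]
      have h2 := congrArg (MvPolynomial.coeff m) h0
      rw [MvPolynomial.coeff_map] at h2
      rw [← Ideal.mem_span_singleton]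
      rw [← Ideal.Quotient.eq_zero_iff_mem]
      simpa [hqdef] using h2
    have hG0 : Polynomial.map q G = 0 :=
      (transcendental_iff.mp (aux_transcendental_of_nonconstant 2 _ hWq)) _ hmap
    have hpG : Polynomial.C p ∣ G := by
      rw [Polynomial.C_dvd_iff_dvd_coeff]
      intro i
      have h3 := congrArg (fun h => Polynomial.coeff h i) hG0
      simp only [Polynomial.coeff_map, Polynomial.coeff_zero] at h3
      rw [← Ideal.mem_span_singleton, ← Ideal.Quotient.eq_zero_iff_mem]
      simpa [hqdef] using h3
    obtain ⟨G₁, rfl⟩ := hpG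
    have hCp : (MvPolynomial.C p : MvPolynomial (Fin 2) R) ≠ 0 := by
      simpa using hp.ne_zero
    have hcancel : Polynomial.aeval W G₁ = MvPolynomial.C a * z := by
      apply mul_left_cancel₀ hCp
      rw [← mul_assoc, ← MvPolynomial.C_mul, ← hGz, map_mul, Polynomial.aeval_C,
        MvPolynomial.algebraMap_eq]
    rw [MvPolynomial.C_mul] at hGz
    rw [map_mul]
    exact mul_dvd_mul_left _ (ih G₁ z hcancel)

lemma aux_inert {K : Type*} [Field K] (f g : MvPolynomial (Fin 2) K) (hf : f ≠ 0) (hg : g ≠ 0)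
    (h : f * g ∈ Algebra.adjoin K {(MvPolynomial.X 0 : MvPolynomial (Fin 2) K)}) :
    f ∈ Algebra.adjoin K {(MvPolynomial.X 0 : MvPolynomial (Fin 2) K)} ∧
    g ∈ Algebra.adjoin K {(MvPolynomial.X 0 : MvPolynomial (Fin 2) K)} := by
  classical
  set e := (renameEquiv K (Equiv.swap (0 : Fin 2) 1)).trans (finSuccEquiv K 1) with hedef
  have heX : e (X 0) = Polynomial.C (X 0) := by
    rw [hedef]
    simp only [AlgEquiv.trans_apply, renameEquiv_apply, rename_X]
    rw [Equiv.swap_apply_left]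
    have h1 : (1 : Fin 2) = Fin.succ 0 := rfl
    rw [h1, finSuccEquiv_X_succ]
  -- membership transfer
  have hmem : ∀ x : MvPolynomial (Fin 2) K,
      x ∈ Algebra.adjoin K {(MvPolynomial.X 0 : MvPolynomial (Fin 2) K)} ↔
      e x ∈ Algebra.adjoin K {(Polynomial.C (X 0) : Polynomial (MvPolynomial (Fin 1) K))} := by
    intro x
    have himg : (Algebra.adjoin K {(MvPolynomial.X 0 : MvPolynomial (Fin 2) K)}).map e.toAlgHom
        = Algebra.adjoin K {(Polynomial.C (X 0) : Polynomial (MvPolynomial (Fin 1) K))} := by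
      rw [AlgHom.map_adjoin, Set.image_singleton]
      congr 1
      exact congrArg _ heX  -- e.toAlgHom (X 0) = e (X 0)
    constructor
    · intro hx
      rw [← himg]
      exact ⟨x, hx, rfl⟩
    · intro hx
      rw [← himg] at hx
      obtain ⟨y, hy, hxy⟩ := hx
      rwa [← e.injective hxy]
  -- characterize adjoin of C (X 0)
  have hchar : ∀ x : Polynomial (MvPolynomial (Fin 1) K),
      x ∈ Algebra.adjoin K {(Polynomial.C (X 0) : Polynomial (MvPolynomial (Fin 1) K))} ↔
      ∃ s, x = Polynomial.C s := by
    intro x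
    constructor
    · intro hx
      set ψ : MvPolynomial (Fin 1) K →ₐ[K] Polynomial (MvPolynomial (Fin 1) K) :=
        IsScalarTower.toAlgHom K _ _ with hψ
      have hle : Algebra.adjoin K {(Polynomial.C (X 0) : Polynomial (MvPolynomial (Fin 1) K))}
          ≤ ψ.range := by
        apply Algebra.adjoin_le
        rintro y rfl
        exact ⟨X 0, rfl⟩
      obtain ⟨s, hs⟩ := hle hx
      exact ⟨s, hs.symm⟩
    · rintro ⟨s, rfl⟩
      have hs : s ∈ Algebra.adjoin K {(X 0 : MvPolynomial (Fin 1) K)} := by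
        have hr : (Set.range (X : Fin 1 → MvPolynomial (Fin 1) K)) = {X 0} := by
          rw [Set.range_unique]
          norm_num
        have := MvPolynomial.adjoin_range_X (R := K) (σ := Fin 1)
        rw [hr] at this
        rw [this]
        trivial
      set ψ : MvPolynomial (Fin 1) K →ₐ[K] Polynomial (MvPolynomial (Fin 1) K) :=
        IsScalarTower.toAlgHom K _ _ with hψ
      have : ψ s ∈ (Algebra.adjoin K {(X 0 : MvPolynomial (Fin 1) K)}).map ψ := ⟨s, hs, rfl⟩
      rw [AlgHom.map_adjoin, Set.image_singleton] at this
      exact this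
  rw [hmem] at h ⊢
  rw [hmem g]
  rw [hchar] at h ⊢
  rw [hchar (e g)]
  rw [map_mul] at h
  obtain ⟨s, hs⟩ := h
  have hf' : e f ≠ 0 := fun h0 => hf (by simpa using e.injective (by simpa using h0))
  have hg' : e g ≠ 0 := fun h0 => hg (by simpa using e.injective (by simpa using h0))
  have hdeg : (e f).natDegree + (e g).natDegree = 0 := by
    rw [← Polynomial.natDegree_mul hf' hg', hs]
    exact Polynomial.natDegree_C s
  constructor
  · obtain ⟨s1, hs1⟩ := Polynomial.natDegree_eq_zero.mp (Nat.eq_zero_of_add_eq_zero_right hdeg)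
    exact ⟨s1, hs1.symm⟩
  · obtain ⟨s2, hs2⟩ := Polynomial.natDegree_eq_zero.mp (Nat.eq_zero_of_add_eq_zero_left hdeg)
    exact ⟨s2, hs2.symm⟩

/-- Let `R` be a UFD with fraction field `K`, and `U ∈ R[X,Y]` such that `K[X,Y]` is a
polynomial ring in one variable over `K[U]`.  Then `D := K[U] ∩ R[X,Y]` is an inert
(factorially closed) subring of `R[X,Y]` and `D = R[W]` for some `W ∈ R[X,Y]` with
`K[W] = K[U]`; since `W` is transcendental over `R`, `D` is a polynomial ring in one variable
over `R`.  Here `R[X,Y]` is identified with its image in `K[X,Y]`, so `D` corresponds to the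
set of `z ∈ R[X,Y]` whose image lies in `K[U]`. -/
theorem inert_coordinate_ring_in_ufd
    {R : Type*} [CommRing R] [IsDomain R] [UniqueFactorizationMonoid R]
    {K : Type*} [Field K] [Algebra R K] [IsFractionRing R K]
    (U : MvPolynomial (Fin 2) R)
    (hU : ∃ V', Function.Bijective
      (aeval ![MvPolynomial.map (algebraMap R K) U, V'] :
        MvPolynomial (Fin 2) K →ₐ[K] MvPolynomial (Fin 2) K)) :
    (∀ x y : MvPolynomial (Fin 2) R, x ≠ 0 → y ≠ 0 →
      MvPolynomial.map (algebraMap R K) (x * y) ∈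
        Algebra.adjoin K {MvPolynomial.map (algebraMap R K) U} →
      MvPolynomial.map (algebraMap R K) x ∈
        Algebra.adjoin K {MvPolynomial.map (algebraMap R K) U} ∧
      MvPolynomial.map (algebraMap R K) y ∈
        Algebra.adjoin K {MvPolynomial.map (algebraMap R K) U}) ∧
    ∃ W : MvPolynomial (Fin 2) R,
      Transcendental R W ∧
      {z : MvPolynomial (Fin 2) R |
        MvPolynomial.map (algebraMap R K) z ∈
          Algebra.adjoin K {MvPolynomial.map (algebraMap R K) U}} =
        (Algebra.adjoin R {W} : Set (MvPolynomial (Fin 2) R)) ∧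
      Algebra.adjoin K {MvPolynomial.map (algebraMap R K) W} =
        Algebra.adjoin K {MvPolynomial.map (algebraMap R K) U} := by
  classical
  obtain ⟨V', hbij⟩ := hU
  set e1 : MvPolynomial (Fin 2) K ≃ₐ[K] MvPolynomial (Fin 2) K :=
    AlgEquiv.ofBijective _ hbij with he1def
  have he1X : e1 (X 0) = MvPolynomial.map (algebraMap R K) U := by
    rw [he1def]
    rw [AlgEquiv.coe_ofBijective]
    rw [aeval_X]
    rfl
  have hinj : Function.Injective (MvPolynomial.map (algebraMap R K) :
      MvPolynomial (Fin 2) R → MvPolynomial (Fin 2) K) :=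
    MvPolynomial.map_injective _ (IsFractionRing.injective R K)
  -- membership transfer through e1
  have hmemU : ∀ x : MvPolynomial (Fin 2) K,
      x ∈ Algebra.adjoin K {MvPolynomial.map (algebraMap R K) U} ↔
      e1.symm x ∈ Algebra.adjoin K {(X 0 : MvPolynomial (Fin 2) K)} := by
    intro x
    have himg : (Algebra.adjoin K {(X 0 : MvPolynomial (Fin 2) K)}).map e1.toAlgHom
        = Algebra.adjoin K {MvPolynomial.map (algebraMap R K) U} := by
      rw [AlgHom.map_adjoin, Set.image_singleton]
      congr 1
      exact congrArg _ he1X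
    constructor
    · intro hx
      rw [← himg] at hx
      obtain ⟨y, hy, hxy⟩ := hx
      have : e1.symm x = y := by rw [← hxy]; exact e1.symm_apply_apply y
      rwa [this]
    · intro hx
      rw [← himg]
      exact ⟨e1.symm x, hx, e1.apply_symm_apply x⟩
  constructor
  · -- Part 1: inertness
    intro x y hx hy hxy
    rw [map_mul] at hxy
    have hfx : MvPolynomial.map (algebraMap R K) x ≠ 0 := fun h =>
      hx (hinj (by rw [h, map_zero]))
    have hfy : MvPolynomial.map (algebraMap R K) y ≠ 0 := fun h =>
      hy (hinj (by rw [h, map_zero]))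
    have hfx' : e1.symm (MvPolynomial.map (algebraMap R K) x) ≠ 0 := fun h =>
      hfx (by simpa using e1.symm.injective (by simpa using h))
    have hfy' : e1.symm (MvPolynomial.map (algebraMap R K) y) ≠ 0 := fun h =>
      hfy (by simpa using e1.symm.injective (by simpa using h))
    rw [hmemU] at hxy
    rw [map_mul] at hxy
    have := aux_inert _ _ hfx' hfy' hxy
    exact ⟨(hmemU _).mpr this.1, (hmemU _).mpr this.2⟩
  · -- Part 2
    -- U is nonconstant
    have hUc : U ≠ MvPolynomial.C (constantCoeff U) := by
      intro h
      have h1 : MvPolynomial.map (algebraMap R K) U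
          = MvPolynomial.C (algebraMap R K (constantCoeff U)) := by
        conv_lhs => rw [h]
        rw [MvPolynomial.map_C]
      have hc : e1 (MvPolynomial.C (algebraMap R K (constantCoeff U)))
          = MvPolynomial.C (algebraMap R K (constantCoeff U)) := by
        rw [← MvPolynomial.algebraMap_eq]
        exact e1.commutes _
      have h2 : e1 (X 0) = e1 (MvPolynomial.C (algebraMap R K (constantCoeff U))) := by
        rw [he1X, h1, hc]
      have h3 := e1.injective h2
      have h4 := congrArg totalDegree h3
      rw [totalDegree_X, totalDegree_C] at h4
      exact one_ne_zero h4
    letI : NormalizationMonoid R :=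
      (UniqueFactorizationMonoid.strongNormalizationMonoid (α := R)).toNormalizationMonoid
    letI : NormalizedGCDMonoid R := UniqueFactorizationMonoid.toNormalizedGCDMonoid R
    set a₀ := constantCoeff U with ha₀
    set N := U - MvPolynomial.C a₀ with hNdef
    have hNne : N ≠ 0 := sub_ne_zero.mpr hUc
    set g := N.support.gcd (fun m => coeff m N) with hgdef
    have hgdvd : ∀ m, g ∣ coeff m N := by
      intro m
      by_cases h : m ∈ N.support
      · exact Finset.gcd_dvd h
      · rw [notMem_support_iff.mp h]
        exact dvd_zero g
    have hg0 : g ≠ 0 := by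
      intro h
      apply hNne
      ext m
      rw [coeff_zero]
      by_cases hm : m ∈ N.support
      · exact Finset.gcd_eq_zero_iff.mp h m hm
      · exact notMem_support_iff.mp hm
    obtain ⟨W, hNW⟩ : MvPolynomial.C g ∣ N := (C_dvd_iff_dvd_coeff g N).mpr hgdvd
    have hWne : W ≠ 0 := fun h => hNne (by rw [hNW, h, mul_zero])
    have hNcc : constantCoeff N = 0 := by
      rw [hNdef, map_sub, constantCoeff_C, ha₀, sub_self]
    have hWcc : constantCoeff W = 0 := by
      have hgw : constantCoeff (MvPolynomial.C g * W) = 0 := by rw [← hNW]; exact hNcc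
      rw [map_mul, constantCoeff_C] at hgw
      rcases mul_eq_zero.mp hgw with h | h
      · exact absurd h hg0
      · exact h
    have hWnotC : W ∉ Set.range (MvPolynomial.C : R → MvPolynomial (Fin 2) R) := by
      rintro ⟨c, rfl⟩
      rw [constantCoeff_C] at hWcc
      exact hWne (by rw [hWcc, map_zero])
    have hWprim : ∀ p : R, Prime p → ∀ c : R,
        ¬ (MvPolynomial.C p ∣ W - MvPolynomial.C c) := by
      intro p hp c hdvd
      have hpc : p ∣ c := by
        have h0 := (C_dvd_iff_dvd_coeff _ _).mp hdvd 0
        rw [coeff_sub, coeff_zero_C, ← constantCoeff_eq, hWcc, zero_sub] at h0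
        exact (dvd_neg.mp h0)
      have hCpW : MvPolynomial.C p ∣ W := by
        obtain ⟨c', rfl⟩ := hpc
        have : W = (W - MvPolynomial.C (p * c')) + MvPolynomial.C (p * c') := by ring
        rw [this]
        exact dvd_add hdvd ⟨MvPolynomial.C c', by rw [← C_mul]⟩
      have hgpg : g * p ∣ g := by
        apply Finset.dvd_gcd
        intro m hm
        have h1 : coeff m N = g * coeff m W := by rw [hNW, coeff_C_mul]
        rw [h1]
        exact mul_dvd_mul_left g ((C_dvd_iff_dvd_coeff _ _).mp hCpW m)
      have : p ∣ 1 := by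
        rw [← mul_dvd_mul_iff_left hg0, mul_one]
        exact hgpg
      exact hp.not_unit (isUnit_of_dvd_one this)
    -- transcendence of W
    have htrW : Transcendental R W := aux_transcendental_of_nonconstant 2 W hWnotC
    have hUeq : U = MvPolynomial.C g * W + MvPolynomial.C a₀ := by
      rw [← hNW, hNdef]; ring
    have hκg : algebraMap R K g ≠ 0 := fun h =>
      hg0 (IsFractionRing.injective R K (by rw [h, map_zero]))
    have hmapU : MvPolynomial.map (algebraMap R K) U
        = MvPolynomial.C (algebraMap R K g) * MvPolynomial.map (algebraMap R K) W
          + MvPolynomial.C (algebraMap R K a₀) := by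
      rw [hUeq, map_add, map_mul, MvPolynomial.map_C, MvPolynomial.map_C]
    have hadj : Algebra.adjoin K {MvPolynomial.map (algebraMap R K) W}
        = Algebra.adjoin K {MvPolynomial.map (algebraMap R K) U} := by
      have hC : ∀ (k : K) (S : Subalgebra K (MvPolynomial (Fin 2) K)),
          (MvPolynomial.C k : MvPolynomial (Fin 2) K) ∈ S := by
        intro k S
        have : (MvPolynomial.C k : MvPolynomial (Fin 2) K) = algebraMap K _ k := rfl
        rw [this]
        exact Subalgebra.algebraMap_mem S k
      apply le_antisymm
      · apply Algebra.adjoin_le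
        intro w hw
        rw [Set.mem_singleton_iff] at hw
        subst hw
        have hu : MvPolynomial.map (algebraMap R K) U
            ∈ Algebra.adjoin K {MvPolynomial.map (algebraMap R K) U} :=
          Algebra.self_mem_adjoin_singleton K _
        have hexp : MvPolynomial.map (algebraMap R K) W
            = MvPolynomial.C (algebraMap R K g)⁻¹
              * (MvPolynomial.map (algebraMap R K) U - MvPolynomial.C (algebraMap R K a₀)) := by
          rw [hmapU, add_sub_cancel_right, ← mul_assoc, ← C_mul,
            inv_mul_cancel₀ hκg, C_1, one_mul]
        rw [hexp]
        exact Subalgebra.mul_mem _ (hC _ _) (Subalgebra.sub_mem _ hu (hC _ _))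
      · apply Algebra.adjoin_le
        intro u hu
        rw [Set.mem_singleton_iff] at hu
        subst hu
        have hw : MvPolynomial.map (algebraMap R K) W
            ∈ Algebra.adjoin K {MvPolynomial.map (algebraMap R K) W} :=
          Algebra.self_mem_adjoin_singleton K _
        rw [hmapU]
        exact Subalgebra.add_mem _ (Subalgebra.mul_mem _ (hC _ _) hw) (hC _ _)
    refine ⟨W, htrW, ?_, hadj⟩
    ext z
    simp only [Set.mem_setOf_eq, SetLike.mem_coe]
    constructor
    · intro hz
      rw [← hadj, Algebra.adjoin_singleton_eq_range_aeval, AlgHom.mem_range] at hz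
      obtain ⟨F, hF⟩ := hz
      obtain ⟨b, hb⟩ := IsLocalization.integerNormalization_map_to_map (nonZeroDivisors R) F
      set G₀ := IsLocalization.integerNormalization (nonZeroDivisors R) F with hG₀def
      have hbne : (b : R) ≠ 0 := nonZeroDivisors.coe_ne_zero b
      have hκb : algebraMap R K (b : R) ≠ 0 := fun h =>
        hbne (IsFractionRing.injective R K (by rw [h, map_zero]))
      have hsmul : (b : R) • F = Polynomial.C (algebraMap R K (b : R)) * F := by
        rw [← algebraMap_smul K (b : R) F, Polynomial.smul_eq_C_mul]
      have heq : Polynomial.aeval W G₀ = MvPolynomial.C (b : R) * z := by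
        apply hinj
        rw [aux_map_polyaeval (algebraMap R K) W G₀, hb, hsmul, map_mul, Polynomial.aeval_C,
          hF, map_mul, MvPolynomial.map_C]
        rfl
      obtain ⟨G₁, hG₁⟩ := aux_dvd_of_aeval_eq W hWnotC hWprim (b : R) G₀ z heq
      have hFeq : F = G₁.map (algebraMap R K) := by
        have h1 : G₀.map (algebraMap R K)
            = Polynomial.C (algebraMap R K (b : R)) * G₁.map (algebraMap R K) := by
          rw [hG₁, Polynomial.map_mul, Polynomial.map_C]
        rw [hb, hsmul] at h1
        exact mul_left_cancel₀ (fun h => hκb (Polynomial.C_injective (by rw [h, map_zero]))) h1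
      rw [Algebra.adjoin_singleton_eq_range_aeval, AlgHom.mem_range]
      refine ⟨G₁, hinj ?_⟩
      rw [aux_map_polyaeval (algebraMap R K) W G₁, ← hFeq, hF]
    · intro hz
      rw [Algebra.adjoin_singleton_eq_range_aeval, AlgHom.mem_range] at hz
      obtain ⟨G, hG⟩ := hz
      rw [← hadj, Algebra.adjoin_singleton_eq_range_aeval, AlgHom.mem_range]
      exact ⟨G.map (algebraMap R K), by rw [← aux_map_polyaeval, hG]⟩
end

section
/- Let p be a prime number, R = ℤ_(p) the localization of ℤ at the prime ideal (p), a = Y^p + Y + p·X ∈ R[X, Y], and g = Z^p − a ∈ R[X, Y, Z]. Then R[X, Y, Z] is a polynomial ring in two variables over R[g] (in particular R[X, Y, Z]/(g) is isomorphic as an R-algebra to a polynomial ring in two variables over R), but R[X, Y] is NOT a polynomial ring in one variable over R[a]. -/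
open MvPolynomial

noncomputable def sAux (p : ℕ) {T : Type*} [CommSemiring T] (x y : T) : T :=
  ∑ k ∈ Finset.Ioo 0 p, x ^ k * y ^ (p - k) * ((p.choose k / p : ℕ) : T)

lemma sAux_pow {p : ℕ} (hp : p.Prime) {T : Type*} [CommSemiring T] (x y : T) :
    (x + y) ^ p = x ^ p + y ^ p + p * sAux p x y :=
  add_pow_prime_eq' hp x y

lemma sAux_map {p : ℕ} {T U : Type*} [CommSemiring T] [CommSemiring U]
    {F : Type*} [FunLike F T U] [RingHomClass F T U] (φ : F) (x y : T) :
    φ (sAux p x y) = sAux p (φ x) (φ y) := by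
  simp only [sAux, map_sum, map_mul, map_pow, map_natCast]

section Pos

variable (p : ℕ) (hp : p.Prime) (R : Type*) [CommRing R]

lemma aux_pos (hp : p.Prime) (g : MvPolynomial (Fin 3) R)
    (hgexp : g = X 2 ^ p - (X 1 ^ p + X 1 + (p : MvPolynomial (Fin 3) R) * X 0)) :
    ∃ f₁ f₂ : MvPolynomial (Fin 3) R,
      Function.Bijective
        (aeval ![g, f₁, f₂] : MvPolynomial (Fin 3) R →ₐ[R] MvPolynomial (Fin 3) R) ∧
      Nonempty ((MvPolynomial (Fin 3) R ⧸ Ideal.span {g}) ≃ₐ[R] MvPolynomial (Fin 2) R) := by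
  -- new coordinates
  refine ⟨X 2 - X 1, X 0 - sAux p (X 2 - X 1) (X 1), ?_⟩
  set f₁ : MvPolynomial (Fin 3) R := X 2 - X 1 with hf₁
  set f₂ : MvPolynomial (Fin 3) R := X 0 - sAux p (X 2 - X 1) (X 1) with hf₂
  set G₁ : MvPolynomial (Fin 3) R := X 1 ^ p - (p : MvPolynomial (Fin 3) R) * X 2 - X 0 with hG₁
  set G₀ : MvPolynomial (Fin 3) R := X 2 + sAux p (X 1) G₁ with hG₀
  set G₂ : MvPolynomial (Fin 3) R := X 1 + G₁ with hG₂
  set F : MvPolynomial (Fin 3) R →ₐ[R] MvPolynomial (Fin 3) R := aeval ![g, f₁, f₂] with hF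
  set G : MvPolynomial (Fin 3) R →ₐ[R] MvPolynomial (Fin 3) R := aeval ![G₀, G₁, G₂] with hG
  have hF0 : F (X 0) = g := by simp [hF]
  have hF1 : F (X 1) = f₁ := by simp [hF]
  have hF2 : F (X 2) = f₂ := by simp [hF]
  have hG0 : G (X 0) = G₀ := by simp [hG]
  have hGX1 : G (X 1) = G₁ := by simp [hG]
  have hGX2 : G (X 2) = G₂ := by simp [hG]
  -- the key binomial identity
  have hkey : g = f₁ ^ p - X 1 - (p : MvPolynomial (Fin 3) R) * f₂ := by
    have h2 := sAux_pow hp (X 2 - X 1 : MvPolynomial (Fin 3) R) (X 1)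
    rw [sub_add_cancel] at h2
    rw [hgexp, h2, hf₁, hf₂]
    ring
  have hFG1 : F G₁ = X 1 := by
    rw [hG₁, map_sub, map_sub, map_pow, map_mul, map_natCast, hF0, hF1, hF2]
    linear_combination -hkey
  have hFG : F.comp G = AlgHom.id R _ := by
    apply algHom_ext
    intro i
    fin_cases i
    · show F (G (X 0)) = X 0
      rw [hG0, hG₀, map_add, sAux_map, hF2, hFG1, hF1, hf₂, hf₁]
      ring
    · show F (G (X 1)) = X 1
      rw [hGX1, hFG1]
    · show F (G (X 2)) = X 2
      rw [hGX2, hG₂, map_add, hF1, hFG1]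
      rw [hf₁]
      ring
  have hGF : G.comp F = AlgHom.id R _ := by
    apply algHom_ext
    intro i
    fin_cases i
    · show G (F (X 0)) = X 0
      rw [hF0, hgexp, map_sub, map_add, map_add, map_pow, map_pow, map_mul, map_natCast,
        hGX1, hGX2, hG0, hG₂]
      rw [sAux_pow hp (X 1 : MvPolynomial (Fin 3) R) G₁, hG₀, hG₁]
      ring
    · show G (F (X 1)) = X 1
      rw [hF1, hf₁, map_sub, hGX1, hGX2, hG₂]
      ring
    · show G (F (X 2)) = X 2
      rw [hF2, hf₂, map_sub, sAux_map, map_sub, hG0, hGX1, hGX2]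
      have h3 : G₂ - G₁ = X 1 := by rw [hG₂]; ring
      rw [h3, hG₀]
      ring
  have hbij : Function.Bijective F := by
    have hL : Function.LeftInverse G F := fun x => by
      have := DFunLike.congr_fun hGF x
      simpa using this
    have hR : Function.RightInverse G F := fun x => by
      have := DFunLike.congr_fun hFG x
      simpa using this
    exact ⟨hL.injective, hR.surjective⟩
  refine ⟨hbij, ?_⟩
  -- quotient equivalence
  set e : MvPolynomial (Fin 3) R ≃ₐ[R] MvPolynomial (Fin 3) R := AlgEquiv.ofBijective F hbij with he
  have heX0 : e (X 0) = g := hF0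
  have hmap1 : Ideal.span {g} = Ideal.map (e : MvPolynomial (Fin 3) R →+* MvPolynomial (Fin 3) R)
      (Ideal.span {X 0}) := by
    rw [Ideal.map_span, Set.image_singleton]
    congr 1
    rw [Set.singleton_eq_singleton_iff]
    exact heX0.symm
  have E1 : (MvPolynomial (Fin 3) R ⧸ Ideal.span {(X 0 : MvPolynomial (Fin 3) R)})
      ≃ₐ[R] (MvPolynomial (Fin 3) R ⧸ Ideal.span {g}) :=
    Ideal.quotientEquivAlg _ _ e hmap1
  set fse : MvPolynomial (Fin 3) R ≃ₐ[R] Polynomial (MvPolynomial (Fin 2) R) :=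
    MvPolynomial.finSuccEquiv R 2 with hfse
  have hmap2 : Ideal.span {(Polynomial.X : Polynomial (MvPolynomial (Fin 2) R))}
      = Ideal.map (fse : MvPolynomial (Fin 3) R →+* Polynomial (MvPolynomial (Fin 2) R))
        (Ideal.span {X 0}) := by
    rw [Ideal.map_span, Set.image_singleton]
    congr 1
    rw [Set.singleton_eq_singleton_iff]
    exact (MvPolynomial.finSuccEquiv_X_zero (R := R) (n := 2)).symm
  have E2 : (MvPolynomial (Fin 3) R ⧸ Ideal.span {(X 0 : MvPolynomial (Fin 3) R)})
      ≃ₐ[R] (Polynomial (MvPolynomial (Fin 2) R) ⧸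
          Ideal.span {(Polynomial.X : Polynomial (MvPolynomial (Fin 2) R))}) :=
    Ideal.quotientEquivAlg _ _ fse hmap2
  have hXC : (Ideal.span {(Polynomial.X : Polynomial (MvPolynomial (Fin 2) R))})
      = Ideal.span {Polynomial.X - Polynomial.C (0 : MvPolynomial (Fin 2) R)} := by
    rw [map_zero, sub_zero]
  have E3 : (Polynomial (MvPolynomial (Fin 2) R) ⧸
      Ideal.span {(Polynomial.X : Polynomial (MvPolynomial (Fin 2) R))})
      ≃ₐ[MvPolynomial (Fin 2) R] MvPolynomial (Fin 2) R :=
    (Ideal.quotientEquivAlgOfEq (MvPolynomial (Fin 2) R) hXC).trans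
      (Polynomial.quotientSpanXSubCAlgEquiv (0 : MvPolynomial (Fin 2) R))
  exact ⟨E1.symm.trans (E2.trans (AlgEquiv.restrictScalars R E3))⟩

end Pos


section Neg
variable (p : ℕ) [hP : (Ideal.span {(p : ℤ)}).IsPrime]
    (R : Type*) [CommRing R] [Algebra ℤ R]
    [IsLocalization.AtPrime R (Ideal.span {(p : ℤ)})]

lemma aux_nonunit {x : R} (hx : ¬ IsUnit x) : x ∈ Ideal.span {(p : R)} := by
  obtain ⟨⟨r, s⟩, rfl⟩ := IsLocalization.mk'_surjective (Ideal.span {(p : ℤ)}).primeCompl x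
  have hr : r ∈ Ideal.span {(p : ℤ)} := by
    by_contra hr
    exact hx ((IsLocalization.AtPrime.isUnit_mk'_iff R _ r s).mpr hr)
  obtain ⟨c, rfl⟩ := Ideal.mem_span_singleton.mp hr
  dsimp only
  rw [← IsLocalization.mul_mk'_eq_mk'_of_mul]
  have h2 : algebraMap ℤ R (p : ℤ) = (p : R) := by simp
  rw [h2]
  exact Ideal.mem_span_singleton.mpr (Dvd.intro _ rfl)

lemma aux_p_nonunit : ¬ IsUnit ((p : R)) := by
  have h2 : algebraMap ℤ R (p : ℤ) = (p : R) := by simp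
  rw [← h2, IsLocalization.AtPrime.isUnit_to_map_iff R (Ideal.span {(p : ℤ)})]
  intro h
  exact h (Ideal.mem_span_singleton.mpr dvd_rfl)

set_option maxHeartbeats 1000000 in
set_option synthInstance.maxHeartbeats 1000000 in
lemma aux_neg (hp : p.Prime)
    (a : MvPolynomial (Fin 2) R)
    (ha : a = X 1 ^ p + X 1 + (p : MvPolynomial (Fin 2) R) * X 0) :
    ¬ (∃ h : MvPolynomial (Fin 2) R,
        Function.Bijective
          (Polynomial.aeval h :
            Polynomial (Algebra.adjoin R {a}) →ₐ[Algebra.adjoin R {a}] MvPolynomial (Fin 2) R)) := by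
  haveI : IsLocalRing R := IsLocalization.AtPrime.isLocalRing R (Ideal.span {(p : ℤ)})
  set k := IsLocalRing.ResidueField R with hk
  set θ : R →+* k := IsLocalRing.residue R with hθ
  have hθp : θ ((p : R)) = 0 := by
    rw [hθ]
    exact Ideal.Quotient.eq_zero_iff_mem.mpr (aux_p_nonunit p R)
  -- the reduction homomorphism ψ : R[x,y] → k[T], x ↦ 0, y ↦ T
  set ψ : MvPolynomial (Fin 2) R →+* Polynomial k :=
    eval₂Hom (Polynomial.C.comp θ) ![0, Polynomial.X] with hψ
  have hψ1 : ψ (X 1) = Polynomial.X := by simp [hψ]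
  have hψp : ψ ((p : MvPolynomial (Fin 2) R)) = 0 := by
    rw [map_natCast, ← Polynomial.C_eq_natCast, show ((p : k)) = 0 from by
      rw [← map_natCast θ p]; exact hθp, map_zero]
  have hψa : ψ a = Polynomial.X ^ p + Polynomial.X := by
    rw [ha, map_add, map_add, map_mul, map_pow, hψ1, hψp, zero_mul, add_zero]
  set I : Ideal (MvPolynomial (Fin 2) R) := Ideal.span {a, (p : MvPolynomial (Fin 2) R)} with hI
  have hψI : ∀ t ∈ I, (Polynomial.X ^ p + Polynomial.X : Polynomial k) ∣ ψ t := by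
    intro t ht
    obtain ⟨f, g, hfg⟩ := Ideal.mem_span_pair.mp ht
    rw [← hfg, map_add, map_mul, map_mul, hψa, hψp, mul_zero, add_zero]
    exact dvd_mul_left _ _
  have hy : X 1 ∉ I := by
    intro hmem
    have hdvd := hψI _ hmem
    rw [hψ1] at hdvd
    have hd := Polynomial.degree_le_of_dvd hdvd Polynomial.X_ne_zero
    have hdeg : (Polynomial.X ^ p + Polynomial.X : Polynomial k).degree = p := by
      rw [Polynomial.degree_add_eq_left_of_degree_lt, Polynomial.degree_X_pow]
      rw [Polynomial.degree_X_pow, Polynomial.degree_X]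
      exact_mod_cast hp.one_lt
    rw [hdeg, Polynomial.degree_X] at hd
    have hle : p ≤ 1 := by exact_mod_cast hd
    have h2 : 2 ≤ p := hp.two_le
    omega
  have hv : X 1 ^ (p - 1) + 1 ∉ I := by
    intro hmem
    have hdvd := hψI _ hmem
    rw [map_add, map_pow, hψ1, map_one] at hdvd
    have := Polynomial.eval_dvd (x := (0 : k)) hdvd
    simp only [Polynomial.eval_add, Polynomial.eval_pow, Polynomial.eval_X,
      Polynomial.eval_one, zero_pow hp.ne_zero, zero_pow (Nat.sub_ne_zero_of_lt hp.one_lt),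
      zero_add] at this
    exact one_ne_zero (zero_dvd_iff.mp this)
  have hprod : X 1 * (X 1 ^ (p - 1) + 1) ∈ I := by
    have key : (X 1 : MvPolynomial (Fin 2) R) * (X 1 ^ (p - 1) + 1)
        = a - (p : MvPolynomial (Fin 2) R) * X 0 := by
      have hpow : (X 1 : MvPolynomial (Fin 2) R) * X 1 ^ (p - 1) = X 1 ^ p := by
        rw [← pow_succ']
        congr 1
        exact Nat.succ_pred_eq_of_pos hp.pos
      rw [ha, mul_add, mul_one, hpow]
      ring
    rw [key]
    exact sub_mem (Ideal.subset_span (by simp))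
      (Ideal.mul_mem_right _ _ (Ideal.subset_span (by simp)))
  rintro ⟨h, hbij⟩
  set A := Algebra.adjoin R {a} with hA
  set Φ : Polynomial A ≃ₐ[A] MvPolynomial (Fin 2) R := AlgEquiv.ofBijective _ hbij with hΦdef
  have haA : a ∈ A := Algebra.self_mem_adjoin_singleton R a
  set aA : A := ⟨a, haA⟩ with haAdef
  set J : Ideal (Polynomial A) := Ideal.span {Polynomial.C aA, Polynomial.C ((p : A))} with hJ
  have hΦa : Φ (Polynomial.C aA) = a := by
    show Polynomial.aeval h (Polynomial.C aA) = a
    rw [Polynomial.aeval_C]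
    rfl
  have hΦp : Φ (Polynomial.C ((p : A))) = (p : MvPolynomial (Fin 2) R) := by
    rw [Polynomial.C_eq_natCast, map_natCast]
  have hmemJ : ∀ w : Polynomial A, w ∈ J ↔ Φ w ∈ I := by
    intro w
    constructor
    · intro hw
      obtain ⟨x, y, hxy⟩ := Ideal.mem_span_pair.mp hw
      refine Ideal.mem_span_pair.mpr ⟨Φ x, Φ y, ?_⟩
      have hcalc : Φ (x * Polynomial.C aA + y * Polynomial.C ((p : A)))
          = Φ x * a + Φ y * (p : MvPolynomial (Fin 2) R) := by
        rw [map_add, map_mul, map_mul, hΦa, hΦp]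
      rw [← hcalc]
      exact congrArg Φ hxy
    · intro hw
      obtain ⟨f, g, hfg⟩ := Ideal.mem_span_pair.mp hw
      refine Ideal.mem_span_pair.mpr ⟨Φ.symm f, Φ.symm g, ?_⟩
      apply Φ.injective
      rw [map_add, map_mul, map_mul, AlgEquiv.apply_symm_apply, AlgEquiv.apply_symm_apply,
        hΦa, hΦp, hfg]
  -- the coefficientwise reduction ε : A[T] → k[T]
  set e0 : MvPolynomial (Fin 2) R →+* R := MvPolynomial.eval (fun _ => (0 : R)) with he0
  set εA : A →+* k := θ.comp (e0.comp A.val.toRingHom) with hεA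
  set ε : Polynomial A →+* Polynomial k := Polynomial.mapRingHom εA with hε
  have he0a : e0 a = 0 := by
    simp [he0, ha, zero_pow hp.ne_zero]
  have hεJ : J ≤ RingHom.ker ε := by
    rw [hJ, Ideal.span_le]
    rintro x hx
    simp only [Set.mem_insert_iff, Set.mem_singleton_iff] at hx
    rcases hx with rfl | rfl
    · show ε (Polynomial.C aA) = 0
      rw [hε, Polynomial.coe_mapRingHom, Polynomial.map_C]
      have : εA aA = 0 := by
        rw [hεA]
        simp only [RingHom.comp_apply]
        rw [show (A.val.toRingHom aA) = a from rfl, he0a, map_zero]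
      rw [this, map_zero]
    · show ε (Polynomial.C ((p : A))) = 0
      rw [hε, Polynomial.coe_mapRingHom, Polynomial.map_C]
      have : εA ((p : A)) = 0 := by
        rw [map_natCast εA p, ← map_natCast θ p]
        exact hθp
      rw [this, map_zero]
  have hker : ∀ w : Polynomial A, ε w = 0 → w ∈ J := by
    intro w hw
    apply Ideal.polynomial_mem_ideal_of_coeff_mem_ideal J w
    intro n
    rw [Ideal.mem_comap]
    have hcoeff : εA (w.coeff n) = 0 := by
      have h1 : (ε w).coeff n = εA (w.coeff n) := by
        rw [hε, Polynomial.coe_mapRingHom, Polynomial.coeff_map]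
      rw [hw] at h1
      simpa using h1.symm
    set s := w.coeff n with hs
    obtain ⟨q, hq⟩ : ∃ q : Polynomial R, Polynomial.aeval a q = (s : MvPolynomial (Fin 2) R) := by
      have hs2 : (s : MvPolynomial (Fin 2) R) ∈ ((Polynomial.aeval a : Polynomial R →ₐ[R] MvPolynomial (Fin 2) R).range) := by
        rw [← Algebra.adjoin_singleton_eq_range_aeval R a]
        exact s.2
      exact hs2
    have heval : e0 ((s : MvPolynomial (Fin 2) R)) = q.coeff 0 := by
      rw [← hq]
      show e0 (Polynomial.eval₂ (algebraMap R _) a q) = q.coeff 0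
      rw [Polynomial.hom_eval₂, he0a, Polynomial.eval₂_at_zero]
      show e0 (MvPolynomial.C (q.coeff 0)) = q.coeff 0
      simp [he0]
    have hθc : θ (q.coeff 0) = 0 := by
      rw [hεA] at hcoeff
      simp only [RingHom.comp_apply] at hcoeff
      rwa [show (A.val.toRingHom s) = (s : MvPolynomial (Fin 2) R) from rfl, heval] at hcoeff
    have hnu : ¬ IsUnit (q.coeff 0) := by
      intro hu
      have := (hu.map θ).ne_zero
      exact this hθc
    obtain ⟨c, hc⟩ := Ideal.mem_span_singleton.mp (aux_nonunit p R hnu)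
    obtain ⟨q1, hq1⟩ := Polynomial.X_dvd_iff.mpr
      (show (q - Polynomial.C (q.coeff 0)).coeff 0 = 0 by simp)
    have hw1mem : Polynomial.aeval a q1 ∈ A := by
      rw [hA, Algebra.adjoin_singleton_eq_range_aeval]
      exact ⟨q1, rfl⟩
    have hcmem : algebraMap R (MvPolynomial (Fin 2) R) c ∈ A := A.algebraMap_mem c
    refine Ideal.mem_span_pair.mpr
      ⟨Polynomial.C ⟨Polynomial.aeval a q1, hw1mem⟩,
       Polynomial.C ⟨algebraMap R (MvPolynomial (Fin 2) R) c, hcmem⟩, ?_⟩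
    rw [← map_mul, ← map_mul, ← map_add]
    congr 1
    apply Subtype.ext
    show Polynomial.aeval a q1 * a + algebraMap R (MvPolynomial (Fin 2) R) c * ((p : A) : MvPolynomial (Fin 2) R)
      = (s : MvPolynomial (Fin 2) R)
    have hcast : ((p : A) : MvPolynomial (Fin 2) R) = (p : MvPolynomial (Fin 2) R) := by
      push_cast; rfl
    rw [hcast, ← hq]
    have hqsplit : q = Polynomial.C (q.coeff 0) + Polynomial.X * q1 := by
      rw [← hq1]; ring
    conv_rhs => rw [hqsplit]
    rw [map_add, map_mul, Polynomial.aeval_C, Polynomial.aeval_X, hc]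
    push_cast
    ring
  -- final contradiction
  set u := Φ.symm (X 1) with hu
  set v := Φ.symm (X 1 ^ (p - 1) + 1) with hvdef
  have huv : u * v ∈ J := by
    rw [hmemJ, map_mul, hu, hvdef, AlgEquiv.apply_symm_apply, AlgEquiv.apply_symm_apply]
    exact hprod
  have hzero : ε u * ε v = 0 := by
    rw [← map_mul]
    exact hεJ huv
  rcases mul_eq_zero.mp hzero with h0 | h0
  · have := (hmemJ u).mp (hker u h0)
    rw [hu, AlgEquiv.apply_symm_apply] at this
    exact hy this
  · have := (hmemJ v).mp (hker v h0)
    rw [hvdef, AlgEquiv.apply_symm_apply] at this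
    exact hv this

end Neg


/-- **Example 5.5.**  Let `p` be a prime, `R = ℤ_(p)` the localization of `ℤ` at `(p)`,
`a = Yᵖ + Y + p·X ∈ R[X,Y]` and `g = Zᵖ - a ∈ R[X,Y,Z]`.  Then `R[X,Y,Z] = R[g]^[2]`
(in particular `R[X,Y,Z]/(g) ≅ R^[2]`), but `R[X,Y]` is not a polynomial ring in one
variable over `R[a]`. -/
theorem example_ZZ_localized_at_p
    (p : ℕ) (hp : p.Prime) [hP : (Ideal.span {(p : ℤ)}).IsPrime]
    (R : Type*) [CommRing R] [Algebra ℤ R]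
    [IsLocalization.AtPrime R (Ideal.span {(p : ℤ)})]
    (a : MvPolynomial (Fin 2) R)
    (ha : a = X 1 ^ p + X 1 + (p : MvPolynomial (Fin 2) R) * X 0)
    (g : MvPolynomial (Fin 3) R)
    (hg : g = X 2 ^ p - rename (Fin.castSucc : Fin 2 → Fin 3) a) :
    (∃ f₁ f₂ : MvPolynomial (Fin 3) R,
      Function.Bijective
        (aeval ![g, f₁, f₂] : MvPolynomial (Fin 3) R →ₐ[R] MvPolynomial (Fin 3) R)) ∧
    Nonempty ((MvPolynomial (Fin 3) R ⧸ Ideal.span {g}) ≃ₐ[R] MvPolynomial (Fin 2) R) ∧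
    ¬ (∃ h : MvPolynomial (Fin 2) R,
        Function.Bijective
          (Polynomial.aeval h :
            Polynomial (Algebra.adjoin R {a}) →ₐ[Algebra.adjoin R {a}] MvPolynomial (Fin 2) R)) := by
  have hgexp : g = X 2 ^ p - (X 1 ^ p + X 1 + (p : MvPolynomial (Fin 3) R) * X 0) := by
    rw [hg, ha]
    simp only [map_add, map_pow, map_mul, map_natCast, rename_X]
    norm_num
  obtain ⟨f₁, f₂, hbij, hne⟩ := aux_pos p R hp g hgexp
  exact ⟨⟨f₁, f₂, hbij⟩, hne, aux_neg p R hp a ha⟩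
end
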